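/- Let H be a real Hilbert space, let F : H → ℝ be convex and Fréchet differentiable with gradient ∇F, assume ∇F is strongly monotone with constant c > 0 and Lipschitz continuous with constant C > 0, and let ū ∈ H satisfy ∇F(ū) = 0. If u : [0,∞) → H is a gradient-flow solution with u(0) = u⁰, then for every ℓ ≥ 0 one has ∫₀^ℓ ‖u'(l)‖ dl ≤ (2/√c)·(F(u⁰) − F(ū))^{1/2} ≤ 2·(C/c)^{1/2}·‖u⁰ − ū‖; in particular the gradient flow has finite length bounded by a constant (depending only on c and C) times ‖u⁰ − ū‖. (Length bound for the gradient flow, Theorem 4.2, equation (4.4).) -/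

import Mathlib

open MeasureTheory

open InnerProductSpace in
theorem strong_convexity_aux
    {H : Type*} [NormedAddCommGroup H] [InnerProductSpace ℝ H] [CompleteSpace H]
    (F : H → ℝ) (gradF : H → H) (hF : ∀ u : H, HasGradientAt F (gradF u) u)
    (c : ℝ) (hc : 0 < c)
    (hmono : ∀ x y : H, c * ‖x - y‖ ^ 2 ≤ (inner ℝ (gradF x - gradF y) (x - y) : ℝ))
    (C : ℝ) (hlip : LipschitzWith C.toNNReal gradF)
    (x y : H) :
    F x + (inner ℝ (gradF x) (y - x) : ℝ) + c / 2 * ‖y - x‖ ^ 2 ≤ F y := by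
  set v := y - x with hv
  have hline : ∀ t : ℝ, HasDerivAt (fun t : ℝ => x + t • v) v t := by
    intro t
    simpa using ((hasDerivAt_id t).smul_const v).const_add x
  have hg : ∀ t : ℝ, HasDerivAt (fun t : ℝ => F (x + t • v))
      ((inner ℝ (gradF (x + t • v)) v : ℝ)) t := by
    intro t
    have := ((hF (x + t • v)).hasFDerivAt.comp_hasDerivAt t (hline t))
    simp [InnerProductSpace.toDual_apply_apply, Function.comp_def] at this; exact this
  have hcont : Continuous fun t : ℝ => (inner ℝ (gradF (x + t • v)) v : ℝ) := by
    have h1 : Continuous fun t : ℝ => gradF (x + t • v) :=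
      hlip.continuous.comp (by continuity)
    exact h1.inner continuous_const
  have hFTC : F (x + (1:ℝ) • v) - F (x + (0:ℝ) • v)
      = ∫ t in (0:ℝ)..1, (inner ℝ (gradF (x + t • v)) v : ℝ) := by
    refine (intervalIntegral.integral_eq_sub_of_hasDerivAt (fun t _ => hg t)
      (hcont.intervalIntegrable 0 1)).symm
  have hptwise : ∀ t ∈ Set.Icc (0:ℝ) 1,
      (inner ℝ (gradF x) v : ℝ) + c * t * ‖v‖ ^ 2 ≤ (inner ℝ (gradF (x + t • v)) v : ℝ) := by
    intro t ht
    rcases eq_or_lt_of_le ht.1 with h0 | h0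
    · simp [← h0]
    · have := hmono (x + t • v) x
      have hsub : x + t • v - x = t • v := by abel
      rw [hsub] at this
      have hin : (inner ℝ (gradF (x + t • v) - gradF x) (t • v) : ℝ)
          = t * ((inner ℝ (gradF (x + t • v)) v : ℝ) - (inner ℝ (gradF x) v : ℝ)) := by
        rw [inner_sub_left, inner_smul_right, inner_smul_right]; ring
      rw [hin, norm_smul] at this
      rw [Real.norm_eq_abs, abs_of_pos h0] at this
      nlinarith [sq_nonneg ‖v‖, this]
  have hint : (∫ t in (0:ℝ)..1, ((inner ℝ (gradF x) v : ℝ) + c * t * ‖v‖ ^ 2))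
      ≤ ∫ t in (0:ℝ)..1, (inner ℝ (gradF (x + t • v)) v : ℝ) := by
    apply intervalIntegral.integral_mono_on zero_le_one
    · exact (Continuous.intervalIntegrable (by continuity) 0 1)
    · exact hcont.intervalIntegrable 0 1
    · exact hptwise
  have hval : (∫ t in (0:ℝ)..1, ((inner ℝ (gradF x) v : ℝ) + c * t * ‖v‖ ^ 2))
      = (inner ℝ (gradF x) v : ℝ) + c / 2 * ‖v‖ ^ 2 := by
    rw [intervalIntegral.integral_add (intervalIntegrable_const)
      ((Continuous.intervalIntegrable (by continuity) 0 1))]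
    have : (∫ t in (0:ℝ)..1, c * t * ‖v‖ ^ 2) = c / 2 * ‖v‖ ^ 2 := by
      have : (fun t : ℝ => c * t * ‖v‖ ^ 2) = fun t : ℝ => (c * ‖v‖ ^ 2) * t := by
        funext t; ring
      rw [this, intervalIntegral.integral_const_mul, integral_id]
      ring
    rw [this]; simp
  simp only [one_smul, zero_smul, add_zero] at hFTC
  have : x + v = y := by rw [hv]; abel
  rw [this] at hFTC
  linarith [hint, hval.symm ▸ hint, hFTC]

set_option maxHeartbeats 1000000 in
/-- Length bound for the gradient flow (Theorem 4.2, equation (4.4)): for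
convex `F` with `c`-strongly monotone and `C`-Lipschitz gradient, a gradient
flow `u` starting at `u⁰` satisfies, for every `ℓ ≥ 0`,
`∫₀^ℓ ‖u'(l)‖ dl ≤ (2/√c)(F(u⁰) − F(ū))^{1/2} ≤ 2(C/c)^{1/2}‖u⁰ − ū‖`. -/
theorem gradient_flow_length_bound
    {H : Type*} [NormedAddCommGroup H] [InnerProductSpace ℝ H] [CompleteSpace H]
    (F : H → ℝ) (hconv : ConvexOn ℝ Set.univ F)
    (gradF : H → H) (hF : ∀ u : H, HasGradientAt F (gradF u) u)
    (c : ℝ) (hc : 0 < c)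
    (hmono : ∀ x y : H, c * ‖x - y‖ ^ 2 ≤ (inner ℝ (gradF x - gradF y) (x - y) : ℝ))
    (C : ℝ) (hC : 0 < C) (hlip : LipschitzWith C.toNNReal gradF)
    (ubar : H) (hcrit : gradF ubar = 0)
    (u0 : H) (u : ℝ → H) (hu0 : u 0 = u0)
    (hu : ∀ l ∈ Set.Ici (0:ℝ), HasDerivWithinAt u (-gradF (u l)) (Set.Ici 0) l) :
    ∀ ℓ ∈ Set.Ici (0:ℝ),
      (∫ l in (0:ℝ)..ℓ, ‖derivWithin u (Set.Ici 0) l‖) ≤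
          2 / Real.sqrt c * Real.sqrt (F u0 - F ubar) ∧
        2 / Real.sqrt c * Real.sqrt (F u0 - F ubar) ≤
          2 * Real.sqrt (C / c) * ‖u0 - ubar‖ := by
  intro ℓ hℓ
  simp only [Set.mem_Ici] at hℓ
  have haux := strong_convexity_aux F gradF hF c hc hmono C hlip
  -- basic consequences
  have hCc : (C.toNNReal : ℝ) = C := Real.coe_toNNReal _ hC.le
  have hgradb : ∀ x : H, ‖gradF x‖ ≤ C * ‖x - ubar‖ := by
    intro x
    have := hlip.dist_le_mul x ubar
    rw [dist_eq_norm, dist_eq_norm, hcrit, sub_zero, hCc] at this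
    exact this
  have hlow : ∀ x : H, c / 2 * ‖x - ubar‖ ^ 2 ≤ F x - F ubar := by
    intro x
    have := haux ubar x
    rw [hcrit] at this
    simp only [inner_zero_left] at this
    linarith
  have hPL : ∀ x : H, 2 * c * (F x - F ubar) ≤ ‖gradF x‖ ^ 2 := by
    intro x
    have h1 := haux x ubar
    have h2 : (inner ℝ (gradF x) (ubar - x) : ℝ) = -(inner ℝ (gradF x) (x - ubar) : ℝ) := by
      rw [show ubar - x = -(x - ubar) by abel, inner_neg_right]
    rw [h2, norm_sub_rev ubar x] at h1
    have h3 := real_inner_le_norm (gradF x) (x - ubar)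
    nlinarith [sq_nonneg (‖gradF x‖ - c * ‖x - ubar‖), norm_nonneg (x - ubar),
      norm_nonneg (gradF x)]
  have hE0nonneg : 0 ≤ F u0 - F ubar := by
    have := hlow u0
    nlinarith [sq_nonneg ‖u0 - ubar‖]
  -- second inequality (independent of ℓ)
  have hsecond : 2 / Real.sqrt c * Real.sqrt (F u0 - F ubar) ≤
      2 * Real.sqrt (C / c) * ‖u0 - ubar‖ := by
    have hE0b : F u0 - F ubar ≤ C * ‖u0 - ubar‖ ^ 2 := by
      have h1 := haux u0 ubar
      have h2 : (inner ℝ (gradF u0) (ubar - u0) : ℝ) = -(inner ℝ (gradF u0) (u0 - ubar) : ℝ) := by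
        rw [show ubar - u0 = -(u0 - ubar) by abel, inner_neg_right]
      rw [h2, norm_sub_rev ubar u0] at h1
      have h3 := real_inner_le_norm (gradF u0) (u0 - ubar)
      have h4 := hgradb u0
      nlinarith [sq_nonneg ‖u0 - ubar‖, norm_nonneg (u0 - ubar), norm_nonneg (gradF u0),
        mul_le_mul_of_nonneg_right h4 (norm_nonneg (u0 - ubar))]
    have hsc : 0 < Real.sqrt c := Real.sqrt_pos.mpr hc
    have hs1 : Real.sqrt (F u0 - F ubar) ≤ Real.sqrt C * ‖u0 - ubar‖ := by
      rw [show Real.sqrt C * ‖u0 - ubar‖ = Real.sqrt (C * ‖u0 - ubar‖ ^ 2) by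
        rw [Real.sqrt_mul hC.le, Real.sqrt_sq (norm_nonneg _)]]
      exact Real.sqrt_le_sqrt hE0b
    calc 2 / Real.sqrt c * Real.sqrt (F u0 - F ubar)
        ≤ 2 / Real.sqrt c * (Real.sqrt C * ‖u0 - ubar‖) := by
          apply mul_le_mul_of_nonneg_left hs1; positivity
      _ = 2 * Real.sqrt (C / c) * ‖u0 - ubar‖ := by
          rw [Real.sqrt_div hC.le]; ring
  refine ⟨?_, hsecond⟩
  -- setup for the first inequality
  have hIci : UniqueDiffOn ℝ (Set.Ici (0:ℝ)) := uniqueDiffOn_Ici 0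
  have hucont : ContinuousOn u (Set.Ici 0) := fun l hl => (hu l hl).continuousWithinAt
  have hder : ∀ l ∈ Set.Ici (0:ℝ), derivWithin u (Set.Ici 0) l = -gradF (u l) :=
    fun l hl => (hu l hl).derivWithin (hIci l hl)
  -- the energy function and its derivative
  set E : ℝ → ℝ := fun l => F (u l) - F ubar with hEdef
  have hE' : ∀ l ∈ Set.Ici (0:ℝ),
      HasDerivWithinAt E (-(‖gradF (u l)‖ ^ 2)) (Set.Ici 0) l := by
    intro l hl
    have h1 := ((hF (u l)).hasFDerivAt.comp_hasDerivWithinAt l (hu l hl)).sub_const (F ubar)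
    simpa [InnerProductSpace.toDual_apply_apply, hEdef, inner_neg_right,
      real_inner_self_eq_norm_sq] using h1
  have hEcont : ContinuousOn E (Set.Ici 0) := fun l hl => (hE' l hl).continuousWithinAt
  have hEderivAt : ∀ l : ℝ, 0 < l → HasDerivAt E (-(‖gradF (u l)‖ ^ 2)) l :=
    fun l hl => (hE' l (le_of_lt hl)).hasDerivAt (Ici_mem_nhds hl)
  have hEnonneg : ∀ l : ℝ, 0 ≤ E l := by
    intro l
    have := hlow (u l)
    have h2 : (0:ℝ) ≤ c / 2 * ‖u l - ubar‖ ^ 2 := by positivity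
    exact le_trans h2 this
  -- the arclength integrand, extended continuously to all of ℝ
  set f : ℝ → ℝ := fun s => ‖gradF (u (max s 0))‖ with hfdef
  have hfcont : Continuous f := by
    have h1 : Continuous fun s : ℝ => u (max s 0) := by
      apply hucont.comp_continuous (continuous_id.max continuous_const)
      intro x; exact Set.mem_Ici.mpr (le_max_right _ _)
    exact (hlip.continuous.comp h1).norm
  set G : ℝ → ℝ := fun l => ∫ s in (0:ℝ)..l, f s with hGdef
  have hG : ∀ l : ℝ, HasDerivAt G (f l) l :=
    fun l => (hfcont.integral_hasStrictDerivAt 0 l).hasDerivAt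
  have hfval : ∀ l ∈ Set.Ici (0:ℝ), f l = ‖gradF (u l)‖ := by
    intro l hl; simp only [hfdef, max_eq_left (Set.mem_Ici.mp hl)]
  -- rewrite the goal integral as G ℓ
  have hGoal : (∫ l in (0:ℝ)..ℓ, ‖derivWithin u (Set.Ici 0) l‖) = G ℓ := by
    apply intervalIntegral.integral_congr
    intro l hl
    rw [Set.uIcc_of_le hℓ] at hl
    have hl0 : (0:ℝ) ≤ l := hl.1
    show ‖derivWithin u (Set.Ici 0) l‖ = f l
    rw [hder l hl0, norm_neg, hfval l hl0]
  rw [hGoal]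
  rcases eq_or_lt_of_le hE0nonneg with hE0 | hE0
  · -- degenerate case : F u0 = F ubar, the flow is constant
    have hanti : AntitoneOn E (Set.Ici 0) := by
      apply antitoneOn_of_hasDerivWithinAt_nonpos (convex_Ici 0) hEcont
        (f' := fun l => -(‖gradF (u l)‖ ^ 2))
      · intro x hx
        rw [interior_Ici] at hx ⊢
        exact (hEderivAt x hx).hasDerivWithinAt
      · intro x hx
        simp only [neg_nonpos]; positivity
    have hgzero : ∀ l ∈ Set.Ici (0:ℝ), gradF (u l) = 0 := by
      intro l hl
      have h1 : E l ≤ E 0 := hanti Set.self_mem_Ici hl (Set.mem_Ici.mp hl)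
      have h2 : E 0 = 0 := by show F (u 0) - F ubar = 0; rw [hu0]; linarith
      have h3 : E l = 0 := le_antisymm (h2 ▸ h1) (hEnonneg l)
      have h4 := hlow (u l)
      have h5 : c / 2 * ‖u l - ubar‖ ^ 2 ≤ 0 := le_trans h4 (le_of_eq h3)
      have h6 : (0:ℝ) ≤ c / 2 * ‖u l - ubar‖ ^ 2 := by positivity
      have h7 : ‖u l - ubar‖ ^ 2 = 0 := by
        by_contra hq
        have hq2 : 0 < ‖u l - ubar‖ ^ 2 :=
          lt_of_le_of_ne (sq_nonneg _) (Ne.symm hq)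
        nlinarith [mul_pos (half_pos hc) hq2]
      have h8 : u l = ubar := by
        rw [← norm_sub_eq_zero_iff]
        exact pow_eq_zero_iff (n := 2) (by norm_num) |>.mp h7
      rw [h8, hcrit]
    have hGzero : G ℓ = 0 := by
      show (∫ s in (0:ℝ)..ℓ, f s) = 0
      have hz : ∀ l ∈ Set.uIcc (0:ℝ) ℓ, f l = 0 := by
        intro l hl
        rw [Set.uIcc_of_le hℓ] at hl
        rw [hfval l hl.1, hgzero l hl.1, norm_zero]
      rw [intervalIntegral.integral_congr hz, intervalIntegral.integral_zero]
    rw [hGzero]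
    positivity
  · -- main case : F u0 > F ubar
    have hgsq : ∀ l : ℝ, ‖gradF (u l)‖ ^ 2 * c ≤ 2 * C ^ 2 * E l := by
      intro l
      have h1 := hgradb (u l)
      have h2 := hlow (u l)
      have h3 : ‖gradF (u l)‖ ^ 2 ≤ C ^ 2 * ‖u l - ubar‖ ^ 2 := by
        nlinarith [norm_nonneg (gradF (u l)), norm_nonneg (u l - ubar)]
      have hEl : E l = F (u l) - F ubar := rfl
      rw [hEl]
      nlinarith [mul_le_mul_of_nonneg_right h3 hc.le,
        mul_le_mul_of_nonneg_left h2 (sq_nonneg C)]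
    set K : ℝ := 2 * C ^ 2 / c with hKdef
    have hK : 0 < K := by positivity
    -- Gronwall : E stays positive
    have hEpos : ∀ l ∈ Set.Ici (0:ℝ), 0 < E l := by
      have hmonoh : MonotoneOn (fun l => E l * Real.exp (K * l)) (Set.Ici 0) := by
        apply monotoneOn_of_hasDerivWithinAt_nonneg (convex_Ici 0)
          (f' := fun l => -(‖gradF (u l)‖ ^ 2) * Real.exp (K * l)
            + E l * (Real.exp (K * l) * K))
        · exact hEcont.mul
            (Real.continuous_exp.comp (continuous_const.mul continuous_id)).continuousOn
        · intro x hx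
          rw [interior_Ici] at hx ⊢
          have hlin : HasDerivAt (fun l : ℝ => K * l) K x := by
            simpa using (hasDerivAt_id x).const_mul K
          exact ((hEderivAt x hx).mul hlin.exp).hasDerivWithinAt
        · intro x hx
          rw [interior_Ici] at hx
          have h2 := Real.exp_pos (K * x)
          have h4 : ‖gradF (u x)‖ ^ 2 ≤ E x * K := by
            rw [hKdef, ← mul_div_assoc, le_div_iff₀ hc]
            nlinarith [hgsq x]
          nlinarith [mul_le_mul_of_nonneg_right h4 h2.le]
      intro l hl
      have h1 : E 0 * Real.exp (K * 0) ≤ E l * Real.exp (K * l) :=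
        hmonoh Set.self_mem_Ici hl (Set.mem_Ici.mp hl)
      have h2 : E 0 = F u0 - F ubar := by show F (u 0) - F ubar = _; rw [hu0]
      rw [h2] at h1
      simp only [mul_zero, Real.exp_zero, mul_one] at h1
      have h3 := Real.exp_pos (K * l)
      nlinarith
    -- the Lyapunov function Φ = G + √(2/c) √E is antitone
    set s2oc : ℝ := Real.sqrt (2 / c) with hs2oc
    have hs2ocpos : 0 < s2oc := Real.sqrt_pos.mpr (by positivity)
    have hPhi : AntitoneOn (fun l => G l + s2oc * Real.sqrt (E l)) (Set.Ici 0) := by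
      apply antitoneOn_of_hasDerivWithinAt_nonpos (convex_Ici 0)
        (f' := fun l => f l + s2oc * (-(‖gradF (u l)‖ ^ 2) / (2 * Real.sqrt (E l))))
      · have hGcont : ContinuousOn G (Set.Ici 0) :=
          fun l _ => (hG l).continuousAt.continuousWithinAt
        exact hGcont.add
          (continuousOn_const.mul (Real.continuous_sqrt.comp_continuousOn hEcont))
      · intro x hx
        rw [interior_Ici] at hx ⊢
        have h1 : HasDerivAt (fun l => Real.sqrt (E l))
            (-(‖gradF (u x)‖ ^ 2) / (2 * Real.sqrt (E x))) x :=
          (hEderivAt x hx).sqrt (ne_of_gt (hEpos x (Set.mem_Ici.mpr (le_of_lt hx))))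
        exact ((hG x).add (h1.const_mul s2oc)).hasDerivWithinAt
      · intro x hx
        rw [interior_Ici] at hx
        have hx0 : (0:ℝ) ≤ x := le_of_lt hx
        rw [hfval x hx0]
        have hepos : 0 < E x := hEpos x hx0
        have hse : 0 < Real.sqrt (E x) := Real.sqrt_pos.mpr hepos
        have hgsq2 : 2 * c * E x ≤ ‖gradF (u x)‖ ^ 2 := hPL (u x)
        have hprod : s2oc * Real.sqrt (2 * c) = 2 := by
          rw [hs2oc, ← Real.sqrt_mul (by positivity)]
          rw [show 2 / c * (2 * c) = 4 by field_simp; ring]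
          rw [show (4:ℝ) = 2 ^ 2 by norm_num, Real.sqrt_sq (by norm_num)]
        have hge : Real.sqrt (2 * c) * Real.sqrt (E x) ≤ ‖gradF (u x)‖ := by
          have h1 : (Real.sqrt (2 * c) * Real.sqrt (E x)) ^ 2 = 2 * c * E x := by
            rw [mul_pow, Real.sq_sqrt (by positivity), Real.sq_sqrt hepos.le]
          nlinarith [norm_nonneg (gradF (u x)),
            mul_nonneg (Real.sqrt_nonneg (2 * c)) hse.le]
        have hkey : 2 * Real.sqrt (E x) * ‖gradF (u x)‖ ≤ s2oc * ‖gradF (u x)‖ ^ 2 := by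
          have h1 : s2oc * ‖gradF (u x)‖ * (Real.sqrt (2 * c) * Real.sqrt (E x))
              ≤ s2oc * ‖gradF (u x)‖ * ‖gradF (u x)‖ :=
            mul_le_mul_of_nonneg_left hge (mul_nonneg hs2ocpos.le (norm_nonneg _))
          have h2 : s2oc * ‖gradF (u x)‖ * (Real.sqrt (2 * c) * Real.sqrt (E x))
              = 2 * Real.sqrt (E x) * ‖gradF (u x)‖ := by
            rw [show s2oc * ‖gradF (u x)‖ * (Real.sqrt (2 * c) * Real.sqrt (E x))
              = (s2oc * Real.sqrt (2 * c)) * (‖gradF (u x)‖ * Real.sqrt (E x)) by ring, hprod]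
            ring
          nlinarith [h1, h2]
        have h2se : (0:ℝ) < 2 * Real.sqrt (E x) := by positivity
        have hrw : ‖gradF (u x)‖ + s2oc * (-(‖gradF (u x)‖ ^ 2) / (2 * Real.sqrt (E x)))
            = ‖gradF (u x)‖ - s2oc * ‖gradF (u x)‖ ^ 2 / (2 * Real.sqrt (E x)) := by ring
        rw [hrw, sub_nonpos]
        rw [le_div_iff₀ h2se]
        nlinarith [hkey]
    have hPhi0 : G 0 + s2oc * Real.sqrt (E 0) = s2oc * Real.sqrt (F u0 - F ubar) := by
      have hG0 : G 0 = 0 := intervalIntegral.integral_same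
      have h2 : E 0 = F u0 - F ubar := by show F (u 0) - F ubar = _; rw [hu0]
      rw [hG0, zero_add, h2]
    have h1 : G ℓ + s2oc * Real.sqrt (E ℓ) ≤ s2oc * Real.sqrt (F u0 - F ubar) := by
      rw [← hPhi0]
      exact hPhi Set.self_mem_Ici (Set.mem_Ici.mpr hℓ) hℓ
    have h2 : 0 ≤ s2oc * Real.sqrt (E ℓ) := by positivity
    have h3 : s2oc ≤ 2 / Real.sqrt c := by
      rw [hs2oc, Real.sqrt_div (by norm_num : (0:ℝ) ≤ 2)]
      have hs2 : Real.sqrt 2 ≤ 2 := by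
        nlinarith [Real.sq_sqrt (by norm_num : (0:ℝ) ≤ 2), Real.sqrt_nonneg 2]
      gcongr
    have h4 : 0 ≤ Real.sqrt (F u0 - F ubar) := Real.sqrt_nonneg _
    nlinarith [mul_le_mul_of_nonneg_right h3 h4]
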